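/- Let (R, 𝔪, k) be a commutative noetherian local Cohen–Macaulay ring. The class of weak balanced big CM R-modules is resolving: it contains all projective R-modules, and for every short exact sequence of R-modules 0 → M' → M → M'' → 0 with M'' weak balanced big CM, the module M is weak balanced big CM if and only if M' is weak balanced big CM (in particular the class is closed under extensions and under kernels of epimorphisms). -/

import Mathlib

open CategoryTheory IsLocalRing

universe u
/-- A system of parameters of a noetherian local ring `R`: a list of `dim R` elements
of the maximal ideal generating an ideal modulo which `R` has Krull dimension `0`. -/
def IsSystemOfParameters (R : Type u) [CommRing R] [IsLocalRing R] (xs : List R) : Prop :=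
  (∀ x ∈ xs, x ∈ maximalIdeal R) ∧
  (xs.length : WithBot (WithTop ℕ)) = ringKrullDim R ∧
  ringKrullDim (R ⧸ Ideal.span {x | x ∈ xs}) = 0

/-- A local ring is Cohen--Macaulay if every system of parameters is an `R`-regular sequence. -/
def IsCohenMacaulayLocalRing (R : Type u) [CommRing R] [IsLocalRing R] : Prop :=
  ∀ xs : List R, IsSystemOfParameters R xs → RingTheory.Sequence.IsRegular R xs

/-- An `R`-module `M` is weak balanced big Cohen--Macaulay if every system of parameters
of `R` is a weak `M`-regular sequence. -/
def IsWeakBalancedBigCM (R : Type u) [CommRing R] [IsLocalRing R]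
    (M : Type u) [AddCommGroup M] [Module R M] : Prop :=
  ∀ xs : List R, IsSystemOfParameters R xs → RingTheory.Sequence.IsWeaklyRegular M xs


open RingTheory.Sequence Pointwise in
/-- For a short exact sequence `0 → M' → M → M'' → 0` with `rs` weakly regular on `M''`,
`rs` is weakly regular on `M` iff it is weakly regular on `M'`. -/
lemma isWeaklyRegular_iff_of_exact {R : Type u} [CommRing R] (rs : List R) :
    ∀ {M' M M'' : Type u} [AddCommGroup M'] [Module R M'] [AddCommGroup M] [Module R M]
      [AddCommGroup M''] [Module R M'']
      (f : M' →ₗ[R] M) (g : M →ₗ[R] M''),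
      Function.Injective f → Function.Surjective g → Function.Exact f g →
      IsWeaklyRegular M'' rs →
      (IsWeaklyRegular M rs ↔ IsWeaklyRegular M' rs) := by
  induction rs with
  | nil => intros; simp
  | cons r rs ih =>
    intro M' M M'' _ _ _ _ _ _ f g hf hg hfg h''
    rw [isWeaklyRegular_cons_iff] at h''
    obtain ⟨hr'', hrs''⟩ := h''
    have hreg : IsSMulRegular M r ↔ IsSMulRegular M' r :=
      ⟨fun h => h.of_injective f hf,
       fun h => isSMulRegular_of_range_eq_ker hf hfg.linearMap_ker_eq.symm h hr''⟩
    have hexact : Function.Exact (QuotSMulTop.map r f) (QuotSMulTop.map r g) :=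
      QuotSMulTop.map_exact r hfg hg
    have hsurj : Function.Surjective (QuotSMulTop.map r g) :=
      QuotSMulTop.map_surjective r hg
    have hinj : Function.Injective (QuotSMulTop.map r f) := by
      rw [← LinearMap.ker_eq_bot, Submodule.eq_bot_iff]
      intro x hx
      obtain ⟨y, rfl⟩ := Submodule.Quotient.mk_surjective _ x
      rw [LinearMap.mem_ker, QuotSMulTop.map_apply_mk,
        Submodule.Quotient.mk_eq_zero] at hx
      have hx' : f y ∈ r • ((⊤ : Submodule R M) : Set M) := by
        rw [← Submodule.coe_pointwise_smul r (⊤ : Submodule R M)]; exact hx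
      obtain ⟨z, -, hz⟩ := Set.mem_smul_set.mp hx' 
      have hgz : g z = 0 := by
        apply hr''.right_eq_zero_of_smul
        rw [← map_smul, hz, hfg.apply_apply_eq_zero]
      obtain ⟨w, hw⟩ := (hfg z).mp hgz
      have : f y = f (r • w) := by rw [map_smul, hw, hz]
      rw [Submodule.Quotient.mk_eq_zero]
      rw [hf this]
      exact Submodule.smul_mem_pointwise_smul _ _ _ trivial
    rw [isWeaklyRegular_cons_iff, isWeaklyRegular_cons_iff, hreg,
      ih _ _ hinj hsurj hexact hrs'']

/-- The class of weak balanced big CM modules over a Cohen--Macaulay noetherian local ring is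
resolving: it contains all projective modules, and for every short exact sequence
`0 → M' → M → M'' → 0` with `M''` weak balanced big CM, `M` is weak balanced big CM if and
only if `M'` is (hence the class is closed under extensions and kernels of epimorphisms). -/
theorem isWeakBalancedBigCM_resolving
    (R : Type u) [CommRing R] [IsNoetherianRing R] [IsLocalRing R]
    (hCM : IsCohenMacaulayLocalRing R) :
    (∀ (P : Type u) (_ : AddCommGroup P) (_ : Module R P),
      Module.Projective R P → IsWeakBalancedBigCM R P) ∧
    (∀ (M' M M'' : Type u) (_ : AddCommGroup M') (_ : Module R M') (_ : AddCommGroup M)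
      (_ : Module R M) (_ : AddCommGroup M'') (_ : Module R M'')
      (f : M' →ₗ[R] M) (g : M →ₗ[R] M''),
      Function.Injective f → Function.Surjective g → Function.Exact f g →
      IsWeakBalancedBigCM R M'' →
      (IsWeakBalancedBigCM R M ↔ IsWeakBalancedBigCM R M')) := by
  constructor
  · intro P _ _ hP xs hxs
    have : Module.Flat R P := Module.Flat.of_projective (M := P)
    have hR : RingTheory.Sequence.IsWeaklyRegular R xs :=
      (hCM xs hxs).toIsWeaklyRegular
    exact ((TensorProduct.rid R P).isWeaklyRegular_congr xs).mp
      hR.isWeaklyRegular_lTensor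
  · intro M' M M'' _ _ _ _ _ _ f g hf hg hfg h''
    constructor
    · intro hM xs hxs
      exact (isWeaklyRegular_iff_of_exact xs f g hf hg hfg (h'' xs hxs)).mp (hM xs hxs)
    · intro hM' xs hxs
      exact (isWeaklyRegular_iff_of_exact xs f g hf hg hfg (h'' xs hxs)).mpr (hM' xs hxs)
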